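/- arXiv:1708.08183 — 2 statements merged into one kernel-verified Lean document; each statement's English description precedes it below -/
import Mathlib

section
/- Let $V$ be a real vector space with a symmetric bilinear form $a$ and a symmetric positive semidefinite bilinear form $b$. Suppose $u$ satisfies $a(u,v)=\lambda b(u,v)$ for all $v\in V$, and there is a constant $C\ge 0$ such that $b(w,w)\le C\, a(w,w)$ for all $w\in V$ (discrete Poincaré inequality), with $a$ positive semidefinite. If $\tilde\lambda = a(\tilde u,\tilde u)/b(\tilde u,\tilde u)$ with $b(\tilde u,\tilde u)>0$ and $\lambda \ge 0$, then $|\tilde\lambda-\lambda|\, b(\tilde u,\tilde u) \le (1+\lambda C)\, a(\tilde u - u, \tilde u - u)$. -/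
/-- Abstract Lemma 4.2 + discrete Poincaré inequality: the Rayleigh quotient
error is bounded by `(1 + lam * C)` times the `a`-energy of the eigenfunction
error. -/
theorem rayleigh_quotient_bound {V : Type*} [AddCommGroup V] [Module ℝ V]
    (a b : V →ₗ[ℝ] V →ₗ[ℝ] ℝ)
    (ha_symm : ∀ x y, a x y = a y x) (hb_symm : ∀ x y, b x y = b y x)
    (ha_psd : ∀ x, 0 ≤ a x x) (hb_psd : ∀ x, 0 ≤ b x x)
    (C : ℝ) (hC : 0 ≤ C) (hpoincare : ∀ w, b w w ≤ C * a w w)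
    (u ut : V) (lam : ℝ) (hlam : 0 ≤ lam)
    (hbut : 0 < b ut ut)
    (heig : ∀ v, a u v = lam * b u v)
    (tlam : ℝ) (htlam : tlam = a ut ut / b ut ut) :
    |tlam - lam| * b ut ut ≤ (1 + lam * C) * a (ut - u) (ut - u) := by
  set e := ut - u with he
  have hb0 : b ut ut ≠ 0 := ne_of_gt hbut
  have h1 : tlam * b ut ut = a ut ut := by
    rw [htlam, div_mul_cancel₀ _ hb0]
  have expa : a e e = a ut ut - a ut u - a u ut + a u u := by
    simp [he, map_sub, LinearMap.sub_apply]; ring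
  have expb : b e e = b ut ut - b ut u - b u ut + b u u := by
    simp [he, map_sub, LinearMap.sub_apply]; ring
  have h2 : a ut u = lam * b ut u := by
    rw [ha_symm ut u, heig ut, hb_symm u ut]
  have h3 : a u ut = lam * b u ut := heig ut
  have h4 : a u u = lam * b u u := heig u
  have h5 : b ut u = b u ut := hb_symm ut u
  have key : (tlam - lam) * b ut ut = a e e - lam * b e e := by
    rw [expa, expb, h2, h3, h4, h5]; nlinarith [h1]
  have hA := ha_psd e
  have hB := hb_psd e
  have hP := hpoincare e
  have hPB : lam * b e e ≤ lam * C * a e e := by nlinarith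
  have habs : |a e e - lam * b e e| ≤ (1 + lam * C) * a e e := by
    rw [abs_le]
    constructor <;> nlinarith
  calc |tlam - lam| * b ut ut = |(tlam - lam) * b ut ut| := by
        rw [abs_mul, abs_of_pos hbut]
    _ = |a e e - lam * b e e| := by rw [key]
    _ ≤ (1 + lam * C) * a e e := habs
end

section
/- Let $V_h$ be a real inner product-type setting with a norm $\trb{\cdot}$ induced by a symmetric positive definite bilinear form $a_s$, and a seminorm $\|\cdot\|_b$ induced by a symmetric positive semidefinite form $b_w$ satisfying $\|v\|_b \le C_P \trb{v}$ for all $v$. Suppose $u_h$ satisfies $a_s(u_h, v) = \lambda_h b_w(u_h, v)$ for all $v \in V_h$, and $\tilde u_h$ satisfies $a_s(\tilde u_h, v) = \mu\, b_w(g, v)$ for all $v \in V_h$, for some $\mu \in \mathbb{R}$ and $g \in V_h$. Then $\trb{\tilde u_h - u_h}^2 = \mu\, b_w(g - u_h, \tilde u_h - u_h) + (\mu - \lambda_h) b_w(u_h, \tilde u_h - u_h)$, and consequently $\trb{\tilde u_h - u_h} \le C_P\big(|\mu|\,\|g - u_h\|_b + |\mu - \lambda_h|\,\|u_h\|_b\big)$.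 -/
/-- Cauchy–Schwarz for a symmetric positive semidefinite bilinear form. -/
lemma psd_cauchy_schwarz {V : Type*} [AddCommGroup V] [Module ℝ V]
    (bw : V →ₗ[ℝ] V →ₗ[ℝ] ℝ) (hsymm : ∀ x y, bw x y = bw y x)
    (hpsd : ∀ v, 0 ≤ bw v v) (x y : V) :
    |bw x y| ≤ Real.sqrt (bw x x) * Real.sqrt (bw y y) := by
  have key : (bw x y) ^ 2 ≤ bw x x * bw y y := by
    have h : ∀ t : ℝ, 0 ≤ bw y y * (t * t) + (2 * bw x y) * t + bw x x := by
      intro t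
      have hexp := hpsd (x + t • y)
      simp only [map_add, map_smul, LinearMap.add_apply, LinearMap.smul_apply,
        smul_eq_mul] at hexp
      rw [hsymm y x] at hexp
      have heq : bw y y * (t * t) + (2 * bw x y) * t + bw x x
          = bw x x + t * bw x y + t * (bw x y + t * bw y y) := by ring
      rw [heq]; exact hexp
    have hd := discrim_le_zero h
    rw [discrim] at hd
    nlinarith
  calc |bw x y| = Real.sqrt ((bw x y) ^ 2) := (Real.sqrt_sq_eq_abs _).symm
    _ ≤ Real.sqrt (bw x x * bw y y) := Real.sqrt_le_sqrt key
    _ = Real.sqrt (bw x x) * Real.sqrt (bw y y) := Real.sqrt_mul (hpsd x) _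

/-- Abstract key computation in Lemma 4.3 / Lemma 5.2: the error between the
two-grid correction `tuh` (solving a source problem with data `μ g`) and the
direct discrete eigenfunction `uh` satisfies an identity and is controlled by
the data errors. -/
theorem two_grid_correction_error {V : Type*} [AddCommGroup V] [Module ℝ V]
    (as bw : V →ₗ[ℝ] V →ₗ[ℝ] ℝ)
    (has_symm : ∀ x y, as x y = as y x) (hbw_symm : ∀ x y, bw x y = bw y x)
    (has_pd : ∀ v, v ≠ 0 → 0 < as v v) (has_psd : ∀ v, 0 ≤ as v v)
    (hbw_psd : ∀ v, 0 ≤ bw v v)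
    (CP : ℝ)
    (hpoincare : ∀ v, Real.sqrt (bw v v) ≤ CP * Real.sqrt (as v v))
    (uh tuh g : V) (lamh mu : ℝ)
    (heig : ∀ v, as uh v = lamh * bw uh v)
    (hsrc : ∀ v, as tuh v = mu * bw g v) :
    Real.sqrt (as (tuh - uh) (tuh - uh)) ^ 2
        = mu * bw (g - uh) (tuh - uh) + (mu - lamh) * bw uh (tuh - uh) ∧
    Real.sqrt (as (tuh - uh) (tuh - uh))
        ≤ CP * (|mu| * Real.sqrt (bw (g - uh) (g - uh))
            + |mu - lamh| * Real.sqrt (bw uh uh)) := by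
  set e := tuh - uh with he
  have hs2 : Real.sqrt (as e e) ^ 2 = as e e := Real.sq_sqrt (has_psd e)
  have hident : as e e = mu * bw (g - uh) e + (mu - lamh) * bw uh e := by
    have h1 : as e e = as tuh e - as uh e := by
      rw [he]; simp only [map_sub, LinearMap.sub_apply]; ring
    have h2 : bw (g - uh) e = bw g e - bw uh e := by
      simp [map_sub, LinearMap.sub_apply]
    rw [h1, hsrc e, heig e, h2]; ring
  refine ⟨by rw [hs2, hident], ?_⟩
  set s := Real.sqrt (as e e) with hsdef
  set a := Real.sqrt (bw (g - uh) (g - uh)) with hadef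
  set b := Real.sqrt (bw uh uh) with hbdef
  have ha0 : 0 ≤ a := Real.sqrt_nonneg _
  have hb0 : 0 ≤ b := Real.sqrt_nonneg _
  have hs0 : 0 ≤ s := Real.sqrt_nonneg _
  have hK0 : 0 ≤ |mu| * a + |mu - lamh| * b :=
    add_nonneg (mul_nonneg (abs_nonneg _) ha0) (mul_nonneg (abs_nonneg _) hb0)
  have heb : Real.sqrt (bw e e) ≤ CP * s := hpoincare e
  have hcs1 : |bw (g - uh) e| ≤ a * Real.sqrt (bw e e) :=
    psd_cauchy_schwarz bw hbw_symm hbw_psd _ _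
  have hcs2 : |bw uh e| ≤ b * Real.sqrt (bw e e) :=
    psd_cauchy_schwarz bw hbw_symm hbw_psd _ _
  have hkey : s ^ 2 ≤ (|mu| * a + |mu - lamh| * b) * (CP * s) := by
    rw [hs2, hident]
    have hbe : 0 ≤ Real.sqrt (bw e e) := Real.sqrt_nonneg _
    calc mu * bw (g - uh) e + (mu - lamh) * bw uh e
        ≤ |mu| * |bw (g - uh) e| + |mu - lamh| * |bw uh e| := by
          have := abs_add_le (mu * bw (g - uh) e) ((mu - lamh) * bw uh e)
          calc mu * bw (g - uh) e + (mu - lamh) * bw uh e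
              ≤ |mu * bw (g - uh) e + (mu - lamh) * bw uh e| := le_abs_self _
            _ ≤ |mu * bw (g - uh) e| + |(mu - lamh) * bw uh e| := this
            _ = |mu| * |bw (g - uh) e| + |mu - lamh| * |bw uh e| := by
                rw [abs_mul, abs_mul]
      _ ≤ |mu| * (a * Real.sqrt (bw e e)) + |mu - lamh| * (b * Real.sqrt (bw e e)) := by
          gcongr <;> positivity
      _ = (|mu| * a + |mu - lamh| * b) * Real.sqrt (bw e e) := by ring
      _ ≤ (|mu| * a + |mu - lamh| * b) * (CP * s) := by gcongr
  rcases eq_or_lt_of_le hs0 with hseq | hspos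
  · -- s = 0; need 0 ≤ CP * (|mu| * a + |mu - lamh| * b)
    rw [← hseq]
    rcases eq_or_lt_of_le hK0 with hKeq | hKpos
    · rw [← hKeq, mul_zero]
    · have hCP : 0 < CP := by
        -- some bw value is positive, so CP > 0
        by_contra hc
        push_neg at hc
        rcases lt_or_ge 0 a with hap | han
        · have h1 := hpoincare (g - uh)
          have : CP * Real.sqrt (as (g - uh) (g - uh)) ≤ 0 :=
            mul_nonpos_of_nonpos_of_nonneg hc (Real.sqrt_nonneg _)
          linarith [h1]
        · have haz : a = 0 := le_antisymm han ha0
          rcases lt_or_ge 0 b with hbp | hbn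
          · have h1 := hpoincare uh
            have : CP * Real.sqrt (as uh uh) ≤ 0 :=
              mul_nonpos_of_nonpos_of_nonneg hc (Real.sqrt_nonneg _)
            linarith [h1]
          · have hbz : b = 0 := le_antisymm hbn hb0
            rw [haz, hbz] at hKpos
            simp at hKpos
      positivity
  · have : s * s ≤ (CP * (|mu| * a + |mu - lamh| * b)) * s := by
      nlinarith [hkey]
    exact le_of_mul_le_mul_right (by linarith [this]) hspos
end
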